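/- Let k2, k3, k4 > 0 and define k := (k2+k3+k4)/2, α1 := -k + sqrt(k² - k2·k4), α2 := -k - sqrt(k² - k2·k4). Then α2 < -k2 < α1 < 0. -/
import Mathlib

theorem stmt_2 (k2 k3 k4 : ℝ) (h2 : 0 < k2) (h3 : 0 < k3) (h4 : 0 < k4) :
    (-(k2 + k3 + k4) / 2 - Real.sqrt (((k2 + k3 + k4) / 2) ^ 2 - k2 * k4)) < -k2 ∧
    -k2 < (-(k2 + k3 + k4) / 2 + Real.sqrt (((k2 + k3 + k4) / 2) ^ 2 - k2 * k4)) ∧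
    (-(k2 + k3 + k4) / 2 + Real.sqrt (((k2 + k3 + k4) / 2) ^ 2 - k2 * k4)) < 0 := by
  have hkpos : 0 < (k2 + k3 + k4) / 2 := by linarith
  have h1 : |(k2 + k3 + k4) / 2 - k2| < Real.sqrt (((k2 + k3 + k4) / 2) ^ 2 - k2 * k4) := by
    rw [← Real.sqrt_sq_eq_abs]
    apply Real.sqrt_lt_sqrt (by positivity)
    nlinarith
  have hlt : Real.sqrt (((k2 + k3 + k4) / 2) ^ 2 - k2 * k4) < (k2 + k3 + k4) / 2 := by
    rw [Real.sqrt_lt' hkpos]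
    nlinarith
  refine ⟨?_, ?_, ?_⟩ <;>
    nlinarith [le_abs_self ((k2 + k3 + k4) / 2 - k2), neg_abs_le ((k2 + k3 + k4) / 2 - k2),
      Real.sqrt_nonneg (((k2 + k3 + k4) / 2) ^ 2 - k2 * k4)]
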